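/- (Strongly-convex SGD under WGC) If f is μ-strongly convex, L-smooth, minimized at w*, and its stochastic gradients are unbiased and satisfy the weak growth condition E_z‖∇f(w,z)‖² ≤ 2ρL[f(w) − f(w*)], then constant step-size SGD with η = 1/(ρL) satisfies E‖w_{k+1} − w*‖² ≤ (1 − μ/(ρL))^{k+1} ‖w₀ − w*‖². -/

import Mathlib

open scoped RealInnerProductSpace
open Finset

/-- Expectation over the first `k` steps of uniform i.i.d. noise in `Fin n`. -/
noncomputable def ExpN (n k : ℕ) (hn : 0 < n) (h : (ℕ → Fin n) → ℝ) : ℝ :=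
  (∑ σ : Fin k → Fin n, h (fun i => if hi : i < k then σ ⟨i, hi⟩ else ⟨0, hn⟩)) / (n : ℝ) ^ k


private lemma sgd_step_aux (d n : ℕ) (hn' : (0:ℝ) < n)
    (f : EuclideanSpace ℝ (Fin d) → ℝ)
    (f' : EuclideanSpace ℝ (Fin d) → EuclideanSpace ℝ (Fin d))
    (G : EuclideanSpace ℝ (Fin d) → Fin n → EuclideanSpace ℝ (Fin d))
    (ρ L μ η : ℝ) (wstar : EuclideanSpace ℝ (Fin d))
    (hsc : ∀ v u, f v ≥ f u + ⟪f' u, v - u⟫ + (μ / 2) * ‖v - u‖ ^ 2)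
    (hmin : ∀ v, f wstar ≤ f v)
    (hunbiased : ∀ v, (1 / (n : ℝ)) • ∑ z, G v z = f' v)
    (hwgc : ∀ v, (1 / (n : ℝ)) * ∑ z, ‖G v z‖ ^ 2 ≤ 2 * ρ * L * (f v - f wstar))
    (hηpos : 0 < η)
    (c : ℝ) (hcη : c = 1 - μ * η) (hη' : η * (ρ * L) = 1) :
    ∀ w : EuclideanSpace ℝ (Fin d),
      ∑ z : Fin n, ‖w - η • G w z - wstar‖ ^ 2 ≤ (n : ℝ) * (c * ‖w - wstar‖ ^ 2) := by
  intro w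
  have hGsum : ∑ z, G w z = (n:ℝ) • f' w := by
    rw [← hunbiased w, smul_smul, mul_one_div, div_self hn'.ne', one_smul]
  have hexp : ∀ z, ‖w - η • G w z - wstar‖ ^ 2 =
      ‖w - wstar‖ ^ 2 - 2 * η * ⟪w - wstar, G w z⟫ + η ^ 2 * ‖G w z‖ ^ 2 := by
    intro z
    have hrw : w - η • G w z - wstar = (w - wstar) - η • G w z := by
      rw [sub_right_comm]
    rw [hrw, norm_sub_sq_real, real_inner_smul_right, norm_smul, Real.norm_eq_abs,
      mul_pow, sq_abs]
    ring
  have hsum : ∑ z : Fin n, ‖w - η • G w z - wstar‖ ^ 2 =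
      (n:ℝ) * ‖w - wstar‖ ^ 2 - 2 * η * ((n:ℝ) * ⟪w - wstar, f' w⟫)
        + η ^ 2 * ∑ z, ‖G w z‖ ^ 2 := by
    simp only [hexp]
    rw [Finset.sum_add_distrib, Finset.sum_sub_distrib, Finset.sum_const,
      Finset.card_univ, Fintype.card_fin, nsmul_eq_mul, ← Finset.mul_sum,
      ← inner_sum, hGsum, real_inner_smul_right, ← Finset.mul_sum]
  set A : ℝ := ‖w - wstar‖ ^ 2 with hA
  set D : ℝ := f w - f wstar with hD
  set P : ℝ := ⟪w - wstar, f' w⟫ with hP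
  set Q : ℝ := ∑ z, ‖G w z‖ ^ 2 with hQ
  have hDpos : 0 ≤ D := sub_nonneg.mpr (hmin w)
  have hPlb : D + μ / 2 * A ≤ P := by
    have h2 := hsc wstar w
    have e1 : ⟪f' w, wstar - w⟫ = -⟪w - wstar, f' w⟫ := by
      rw [real_inner_comm (f' w) (w - wstar), ← inner_neg_right, neg_sub]
    have e2 : ‖wstar - w‖ = ‖w - wstar‖ := norm_sub_rev _ _
    rw [e1, e2] at h2
    rw [hP, hD, hA]
    nlinarith [h2]
  have hQub : Q ≤ (n:ℝ) * (2 * ρ * L * D) := by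
    have h := hwgc w
    rw [hQ, hD]
    calc (∑ z, ‖G w z‖ ^ 2) = (n:ℝ) * (1 / (n:ℝ) * ∑ z, ‖G w z‖ ^ 2) := by
          field_simp
      _ ≤ (n:ℝ) * (2 * ρ * L * (f w - f wstar)) := mul_le_mul_of_nonneg_left h hn'.le
  rw [hsum]
  have hq2 : η ^ 2 * Q ≤ 2 * η * (n:ℝ) * D := by
    have h1 : η ^ 2 * Q ≤ η ^ 2 * ((n:ℝ) * (2 * ρ * L * D)) :=
      mul_le_mul_of_nonneg_left hQub (sq_nonneg η)
    have h2 : η ^ 2 * ((n:ℝ) * (2 * ρ * L * D)) = 2 * η * (n:ℝ) * D := by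
      linear_combination 2 * η * (n:ℝ) * D * hη'
    linarith
  have hp2 := mul_le_mul_of_nonneg_left hPlb
    (by positivity : (0:ℝ) ≤ 2 * η * (n:ℝ))
  rw [hcη]
  clear_value A D P Q
  ring_nf at hp2 hq2 ⊢
  linarith only [hp2, hq2]

private lemma sgd_split_aux (d n : ℕ) (hn : 0 < n) (wstar : EuclideanSpace ℝ (Fin d))
    (W : (ℕ → Fin n) → ℕ → EuclideanSpace ℝ (Fin d)) (k : ℕ) :
    (∑ σ : Fin (k+1) → Fin n,
        ‖W (fun i => if hi : i < k + 1 then σ ⟨i, hi⟩ else ⟨0, hn⟩) (k+1) - wstar‖ ^ 2)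
      = ∑ τ : Fin k → Fin n, ∑ z : Fin n,
        ‖W (fun i => if hi : i < k + 1 then (Fin.snoc τ z : Fin (k+1) → Fin n) ⟨i, hi⟩
            else ⟨0, hn⟩) (k+1) - wstar‖ ^ 2 := by
  rw [← Equiv.sum_comp (Fin.snocEquiv (fun _ => Fin n))
    (fun σ : Fin (k+1) → Fin n =>
      ‖W (fun i => if hi : i < k + 1 then σ ⟨i, hi⟩ else ⟨0, hn⟩) (k+1) - wstar‖ ^ 2)]
  rw [Fintype.sum_prod_type, Finset.sum_comm]
  apply Finset.sum_congr rfl; intro τ _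
  apply Finset.sum_congr rfl; intro z _
  simp only [Fin.snocEquiv_apply]

/-- Strongly-convex SGD under the weak growth condition:
with `η = 1/(ρL)`, `E‖w_{k+1} − w*‖² ≤ (1 − μ/(ρL))^{k+1} ‖w₀ − w*‖²`. -/
theorem sgd_strongly_convex_wgc
    (d n : ℕ) (hn : 0 < n)
    (f : EuclideanSpace ℝ (Fin d) → ℝ)
    (f' : EuclideanSpace ℝ (Fin d) → EuclideanSpace ℝ (Fin d))
    (G : EuclideanSpace ℝ (Fin d) → Fin n → EuclideanSpace ℝ (Fin d))
    (ρ L μ η : ℝ) (w0 wstar : EuclideanSpace ℝ (Fin d))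
    (W : (ℕ → Fin n) → ℕ → EuclideanSpace ℝ (Fin d))
    (hL : 0 < L) (hρ : 1 ≤ ρ) (hμ : 0 < μ)
    (hgrad : ∀ v, HasGradientAt f (f' v) v)
    (hlip : LipschitzWith (Real.toNNReal L) f')
    (hsc : ∀ v u, f v ≥ f u + ⟪f' u, v - u⟫ + (μ / 2) * ‖v - u‖ ^ 2)
    (hmin : ∀ v, f wstar ≤ f v)
    (hunbiased : ∀ v, (1 / (n : ℝ)) • ∑ z, G v z = f' v)
    (hwgc : ∀ v, (1 / (n : ℝ)) * ∑ z, ‖G v z‖ ^ 2 ≤ 2 * ρ * L * (f v - f wstar))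
    (hη : η = 1 / (ρ * L))
    (hW0 : ∀ ω, W ω 0 = w0)
    (hWs : ∀ ω k, W ω (k + 1) = W ω k - η • G (W ω k) (ω k)) :
    ∀ k : ℕ, ExpN n (k + 1) hn (fun ω => ‖W ω (k + 1) - wstar‖ ^ 2)
      ≤ (1 - μ / (ρ * L)) ^ (k + 1) * ‖w0 - wstar‖ ^ 2 := by
  have hρL : 0 < ρ * L := mul_pos (lt_of_lt_of_le one_pos hρ) hL
  have hn' : (0:ℝ) < n := Nat.cast_pos.mpr hn
  have hηpos : 0 < η := by rw [hη]; positivity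
  set c : ℝ := 1 - μ / (ρ * L) with hc
  suffices H : ∀ k : ℕ, ExpN n k hn (fun ω => ‖W ω k - wstar‖ ^ 2)
      ≤ c ^ k * ‖w0 - wstar‖ ^ 2 by
    intro k; exact H (k + 1)
  rcases Nat.eq_zero_or_pos d with hd | hd
  · -- trivial dimension: everything is zero
    subst hd
    have hzero : ∀ x y : EuclideanSpace ℝ (Fin 0), x = y := by
      intro x y; ext i; exact i.elim0
    intro k
    have h1 : ∀ ω : ℕ → Fin n, ‖W ω k - wstar‖ ^ 2 = 0 := by
      intro ω; rw [hzero (W ω k) wstar, sub_self, norm_zero]; ring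
    have h2 : ‖w0 - wstar‖ ^ 2 = 0 := by
      rw [hzero w0 wstar, sub_self, norm_zero]; ring
    simp only [ExpN, h1, h2, Finset.sum_const, mul_zero, smul_zero, zero_div]
    exact le_refl 0
  -- nontrivial dimension: μ ≤ ρ L, hence 0 ≤ c
  have hμL : μ ≤ ρ * L := by
    have hi : (0:ℕ) < d := hd
    set u : EuclideanSpace ℝ (Fin d) := wstar with hu
    set v : EuclideanSpace ℝ (Fin d) := wstar + EuclideanSpace.single ⟨0, hi⟩ (1:ℝ) with hv
    have hvu : v - u = EuclideanSpace.single ⟨0, hi⟩ (1:ℝ) := by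
      rw [hv, hu, add_sub_cancel_left]
    have hnorm : ‖v - u‖ = 1 := by rw [hvu, EuclideanSpace.norm_single]; norm_num
    have h1 := hsc v u
    have h2 := hsc u v
    have huv : ‖u - v‖ = ‖v - u‖ := norm_sub_rev _ _
    have hiuv : ⟪f' v, u - v⟫ = -⟪f' v, v - u⟫ := by
      rw [← inner_neg_right, neg_sub]
    have hkey : μ * ‖v - u‖ ^ 2 ≤ ⟪f' v - f' u, v - u⟫ := by
      rw [inner_sub_left]
      rw [huv, hiuv] at h2
      nlinarith [h1, h2]
    have hcs : ⟪f' v - f' u, v - u⟫ ≤ ‖f' v - f' u‖ * ‖v - u‖ := real_inner_le_norm _ _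
    have hlipvu : ‖f' v - f' u‖ ≤ L * ‖v - u‖ := by
      have := hlip.dist_le_mul v u
      rw [dist_eq_norm, dist_eq_norm] at this
      rwa [Real.coe_toNNReal L hL.le] at this
    rw [hnorm] at hkey hcs hlipvu
    norm_num at hkey hcs hlipvu
    nlinarith [hkey, hcs, hlipvu, mul_nonneg (sub_nonneg.mpr hρ) hL.le]
  have hc0 : 0 ≤ c := by
    rw [hc, sub_nonneg, div_le_one hρL]; exact hμL
  have hcη : c = 1 - μ * η := by rw [hc, hη]; field_simp
  have hη' : η * (ρ * L) = 1 := by rw [hη]; field_simp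
  -- one-step contraction
  have step : ∀ w : EuclideanSpace ℝ (Fin d),
      ∑ z : Fin n, ‖w - η • G w z - wstar‖ ^ 2 ≤ (n : ℝ) * (c * ‖w - wstar‖ ^ 2) :=
    sgd_step_aux d n hn' f f' G ρ L μ η wstar hsc hmin hunbiased hwgc hηpos c hcη hη'
  -- dependence of W on finitely many coordinates
  have Wdep : ∀ (m : ℕ) (ω ω' : ℕ → Fin n), (∀ i, i < m → ω i = ω' i) → W ω m = W ω' m := by
    intro m
    induction m with
    | zero => intro ω ω' _; rw [hW0, hW0]
    | succ m ih =>
      intro ω ω' h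
      rw [hWs, hWs, ih ω ω' (fun i hi => h i (Nat.lt_succ_of_lt hi)), h m (Nat.lt_succ_self m)]
  -- the recursion on the full sums
  have key : ∀ k : ℕ,
      (∑ σ : Fin (k+1) → Fin n,
        ‖W (fun i => if hi : i < k + 1 then σ ⟨i, hi⟩ else ⟨0, hn⟩) (k+1) - wstar‖ ^ 2)
      ≤ (n:ℝ) * (c * ∑ τ : Fin k → Fin n,
        ‖W (fun i => if hi : i < k then τ ⟨i, hi⟩ else ⟨0, hn⟩) k - wstar‖ ^ 2) := by
    intro k
    have hsplit : (∑ σ : Fin (k+1) → Fin n,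
        ‖W (fun i => if hi : i < k + 1 then σ ⟨i, hi⟩ else ⟨0, hn⟩) (k+1) - wstar‖ ^ 2)
      = ∑ τ : Fin k → Fin n, ∑ z : Fin n,
        ‖W (fun i => if hi : i < k + 1 then (Fin.snoc τ z : Fin (k+1) → Fin n) ⟨i, hi⟩ else ⟨0, hn⟩) (k+1) - wstar‖ ^ 2 := sgd_split_aux d n hn wstar W k
    rw [hsplit]
    have inner_bound : ∀ τ : Fin k → Fin n,
        (∑ z : Fin n,
          ‖W (fun i => if hi : i < k + 1 then (Fin.snoc τ z : Fin (k+1) → Fin n) ⟨i, hi⟩ else ⟨0, hn⟩) (k+1) - wstar‖ ^ 2)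
        ≤ (n:ℝ) * (c * ‖W (fun i => if hi : i < k then τ ⟨i, hi⟩ else ⟨0, hn⟩) k - wstar‖ ^ 2) := by
      intro τ
      set wk := W (fun i => if hi : i < k then τ ⟨i, hi⟩ else ⟨0, hn⟩) k with hwk
      have hWeq : ∀ z : Fin n,
          W (fun i => if hi : i < k + 1 then (Fin.snoc τ z : Fin (k+1) → Fin n) ⟨i, hi⟩ else ⟨0, hn⟩) (k+1)
          = wk - η • G wk z := by
        intro z
        set ω : ℕ → Fin n := fun i => if hi : i < k + 1 then (Fin.snoc τ z : Fin (k+1) → Fin n) ⟨i, hi⟩ else ⟨0, hn⟩ with hω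
        have hωk : ω k = z := by
          show (if hi : k < k + 1 then (Fin.snoc τ z : Fin (k+1) → Fin n) ⟨k, hi⟩ else ⟨0, hn⟩) = z
          rw [dif_pos (Nat.lt_succ_self k)]
          have : (⟨k, Nat.lt_succ_self k⟩ : Fin (k+1)) = Fin.last k := rfl
          rw [this, Fin.snoc_last]
        have hWk : W ω k = wk := by
          apply Wdep
          intro i hi
          show (if h : i < k + 1 then (Fin.snoc τ z : Fin (k+1) → Fin n) ⟨i, h⟩ else ⟨0, hn⟩)
            = (if h : i < k then τ ⟨i, h⟩ else ⟨0, hn⟩)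
          rw [dif_pos (Nat.lt_succ_of_lt hi), dif_pos hi]
          have : (⟨i, Nat.lt_succ_of_lt hi⟩ : Fin (k+1)) = Fin.castSucc ⟨i, hi⟩ := rfl
          rw [this, Fin.snoc_castSucc]
        rw [hWs, hωk, hWk]
      calc (∑ z : Fin n,
          ‖W (fun i => if hi : i < k + 1 then (Fin.snoc τ z : Fin (k+1) → Fin n) ⟨i, hi⟩ else ⟨0, hn⟩) (k+1) - wstar‖ ^ 2)
          = ∑ z : Fin n, ‖wk - η • G wk z - wstar‖ ^ 2 := by
            apply Finset.sum_congr rfl; intro z _; rw [hWeq z]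
        _ ≤ (n:ℝ) * (c * ‖wk - wstar‖ ^ 2) := step wk
    calc (∑ τ : Fin k → Fin n, ∑ z : Fin n,
          ‖W (fun i => if hi : i < k + 1 then (Fin.snoc τ z : Fin (k+1) → Fin n) ⟨i, hi⟩ else ⟨0, hn⟩) (k+1) - wstar‖ ^ 2)
        ≤ ∑ τ : Fin k → Fin n,
          (n:ℝ) * (c * ‖W (fun i => if hi : i < k then τ ⟨i, hi⟩ else ⟨0, hn⟩) k - wstar‖ ^ 2) :=
          Finset.sum_le_sum (fun τ _ => inner_bound τ)
      _ = (n:ℝ) * (c * ∑ τ : Fin k → Fin n,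
          ‖W (fun i => if hi : i < k then τ ⟨i, hi⟩ else ⟨0, hn⟩) k - wstar‖ ^ 2) := by
          rw [← Finset.mul_sum, ← Finset.mul_sum]
  -- main induction
  intro k
  induction k with
  | zero =>
    simp only [ExpN, pow_zero, div_one, one_mul]
    rw [Finset.sum_congr rfl (fun σ _ => by rw [hW0])]
    rw [Finset.sum_const, Finset.card_univ]
    simp
  | succ k ih =>
    simp only [ExpN] at ih ⊢
    calc (∑ σ : Fin (k+1) → Fin n,
          ‖W (fun i => if hi : i < k + 1 then σ ⟨i, hi⟩ else ⟨0, hn⟩) (k+1) - wstar‖ ^ 2)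
          / (n:ℝ) ^ (k+1)
        ≤ ((n:ℝ) * (c * ∑ τ : Fin k → Fin n,
          ‖W (fun i => if hi : i < k then τ ⟨i, hi⟩ else ⟨0, hn⟩) k - wstar‖ ^ 2))
          / (n:ℝ) ^ (k+1) := by
          apply div_le_div_of_nonneg_right (key k) (by positivity)
      _ = c * ((∑ τ : Fin k → Fin n,
          ‖W (fun i => if hi : i < k then τ ⟨i, hi⟩ else ⟨0, hn⟩) k - wstar‖ ^ 2) / (n:ℝ) ^ k) := by
          rw [pow_succ]
          field_simp
      _ ≤ c * (c ^ k * ‖w0 - wstar‖ ^ 2) := mul_le_mul_of_nonneg_left ih hc0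
      _ = c ^ (k+1) * ‖w0 - wstar‖ ^ 2 := by ring
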